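/- If A ⊆ ℕ has gap density λ(A) > 1 (i.e., limsup a_{n+1}/a_n > 1 where A = {a_1 < a_2 < ...}), then d̲̲(A) = 0, i.e., every subset of A having asymptotic density has density 0. -/

import Mathlib

open Filter

/-- `cnt A n` = number of elements of `A` in `[1, n]`, as a real number. -/
noncomputable def cnt (A : Set ℕ) (n : ℕ) : ℝ :=
  ∑ k ∈ Finset.Icc 1 n, A.indicator (fun _ => (1 : ℝ)) k

/-- `A` has asymptotic density `x`. -/
def HasDens (A : Set ℕ) (x : ℝ) : Prop :=
  Filter.Tendsto (fun n => cnt A n / n) Filter.atTop (nhds x)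

/-- `lld A` = sup of densities of subsets of `A` having asymptotic density. -/
noncomputable def lld (A : Set ℕ) : ℝ := sSup {x : ℝ | ∃ B ⊆ A, HasDens B x}

/-- `uud A` = inf of densities of supersets of `A` having asymptotic density. -/
noncomputable def uud (A : Set ℕ) : ℝ := sInf {x : ℝ | ∃ C : Set ℕ, A ⊆ C ∧ HasDens C x}

lemma cnt_nonneg (B : Set ℕ) (n : ℕ) : 0 ≤ cnt B n := by
  apply Finset.sum_nonneg
  intro k _
  exact Set.indicator_nonneg (fun _ _ => zero_le_one) k

lemma cnt_eq_Ioc (B : Set ℕ) (n : ℕ) :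
    cnt B n = ∑ k ∈ Finset.Ioc 0 n, B.indicator (fun _ => (1 : ℝ)) k := by
  rw [cnt, show (1 : ℕ) = 0 + 1 from rfl, Finset.Icc_add_one_left_eq_Ioc]

lemma cnt_flat (A : Set ℕ) (a : ℕ → ℕ) (ha : StrictMono a) (hrange : Set.range a = A)
    (B : Set ℕ) (hB : B ⊆ A) (n : ℕ) :
    cnt B (a (n + 1) - 1) = cnt B (a n) := by
  have hlt : a n < a (n + 1) := ha (Nat.lt_succ_self n)
  have h1 : a n ≤ a (n + 1) - 1 := by omega
  rw [cnt_eq_Ioc, cnt_eq_Ioc, ← Finset.sum_Ioc_consecutive _ (Nat.zero_le (a n)) h1]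
  have h0 : ∑ k ∈ Finset.Ioc (a n) (a (n + 1) - 1), B.indicator (fun _ => (1 : ℝ)) k = 0 := by
    apply Finset.sum_eq_zero
    intro k hk
    simp only [Finset.mem_Ioc] at hk
    apply Set.indicator_of_notMem
    intro hkB
    have hkA : k ∈ A := hB hkB
    rw [← hrange] at hkA
    obtain ⟨j, rfl⟩ := hkA
    have h2 : n < j := ha.lt_iff_lt.mp hk.1
    have h3 : j < n + 1 := ha.lt_iff_lt.mp (by omega)
    omega
  rw [h0, add_zero]

theorem stmt_19 (A : Set ℕ) (a : ℕ → ℕ) (ha : StrictMono a)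
    (hrange : Set.range a = A)
    (hgap : 1 < Filter.limsup (fun n => (a (n + 1) : ℝ) / a n) Filter.atTop) :
    lld A = 0 ∧ ∀ B ⊆ A, ∀ x : ℝ, HasDens B x → x = 0 := by
  set u : ℕ → ℝ := fun n => (a (n + 1) : ℝ) / a n with hu
  have key : ∀ B ⊆ A, ∀ x : ℝ, HasDens B x → x = 0 := by
    intro B hBA x hx
    have hx0 : 0 ≤ x := by
      apply ge_of_tendsto hx
      filter_upwards [eventually_ge_atTop 1] with n hn
      exact div_nonneg (cnt_nonneg B n) (Nat.cast_nonneg n)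
    rcases eq_or_lt_of_le hx0 with h | hxpos
    · exact h.symm
    exfalso
    obtain ⟨c, hc1, hfreq⟩ : ∃ c : ℝ, 1 < c ∧ ∃ᶠ n in atTop, c < u n := by
      refine ⟨(1 + limsup u atTop) / 2, by linarith, ?_⟩
      apply frequently_lt_of_lt_limsup
      · exact isCoboundedUnder_le_of_le atTop
          (fun n => div_nonneg (Nat.cast_nonneg _) (Nat.cast_nonneg _))
      · linarith
    obtain ⟨ε, hεpos, hεx, hεdef⟩ :
        ∃ ε : ℝ, 0 < ε ∧ ε < x ∧ ε * (c + 1) * 2 = x * (c - 1) := by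
      refine ⟨x * (c - 1) / (2 * (c + 1)), ?_, ?_, ?_⟩
      · exact div_pos (mul_pos hxpos (by linarith)) (by linarith)
      · rw [div_lt_iff₀ (by linarith)]
        nlinarith
      · field_simp
    obtain ⟨N, hN⟩ := Metric.tendsto_atTop.mp hx ε hεpos
    obtain ⟨K0, hK0⟩ := exists_nat_gt (2 / (c - 1))
    set K := max (max N K0) 1 with hK
    obtain ⟨n, hnK, hcu⟩ := frequently_atTop.mp hfreq K
    have han : K ≤ a n := le_trans hnK (ha.le_apply)
    have hanpos : 0 < a n := lt_of_lt_of_le (le_max_right _ 1) han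
    have hanR : (0 : ℝ) < a n := by exact_mod_cast hanpos
    have hgt : c * a n < a (n + 1) := (lt_div_iff₀ hanR).mp hcu
    have hlt : a n < a (n + 1) := ha (Nat.lt_succ_self n)
    set m := a (n + 1) - 1 with hm
    have ham : a n ≤ m := by omega
    have hmR : (m : ℝ) = (a (n + 1) : ℝ) - 1 := by
      have : (1 : ℕ) ≤ a (n + 1) := by omega
      push_cast [hm, Nat.cast_sub this]
      ring
    have hmpos : (0 : ℝ) < m := by
      have h2 : (2 : ℕ) ≤ a (n + 1) := by omega
      have : (2 : ℝ) ≤ (a (n + 1) : ℝ) := by exact_mod_cast h2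
      rw [hmR]; linarith
    have hNan : N ≤ a n := le_trans (le_trans (le_max_left N K0) (le_max_left _ 1)) han
    have hNm : N ≤ m := le_trans hNan ham
    -- density estimates
    have e1 := hN (a n) hNan
    have e2 := hN m hNm
    rw [Real.dist_eq, abs_lt] at e1 e2
    have hflat : cnt B m = cnt B (a n) := cnt_flat A a ha hrange B hBA n
    have hub : cnt B (a n) < (x + ε) * a n := by
      have := e1.2
      rw [div_sub' (ne_of_gt hanR), div_lt_iff₀ hanR] at this
      nlinarith
    have hlb : (x - ε) * m < cnt B (a n) := by
      have := e2.1
      rw [← hflat]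
      have h' : x - ε < cnt B m / m := by linarith
      calc (x - ε) * m < (cnt B m / m) * m := by
            exact mul_lt_mul_of_pos_right h' hmpos
        _ = cnt B m := by field_simp
    -- combine
    have hcomb : (x - ε) * (c * a n - 1) < (x + ε) * a n := by
      have h1 : c * a n - 1 ≤ (m : ℝ) := by rw [hmR]; linarith
      have hxε : 0 < x - ε := by linarith
      nlinarith
    have htK0 : (2 / (c - 1) : ℝ) < a n := by
      calc (2 / (c - 1) : ℝ) < K0 := hK0
        _ ≤ K := by exact_mod_cast le_trans (le_max_right N K0) (le_max_left _ 1)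
        _ ≤ a n := by exact_mod_cast han
    have ht : 2 < (a n : ℝ) * (c - 1) := by
      rw [div_lt_iff₀ (by linarith)] at htK0
      linarith
    have expand : (a n : ℝ) * (x * (c - 1)) - (a n : ℝ) * (ε * (c + 1)) < x - ε := by
      nlinarith [hcomb]
    have s2t : (a n : ℝ) * (ε * (c + 1) * 2) = (a n : ℝ) * (x * (c - 1)) := by rw [hεdef]
    have s4 : x * 2 < x * ((a n : ℝ) * (c - 1)) := mul_lt_mul_of_pos_left ht hxpos
    linarith only [expand, s2t, s4, hεpos]
  refine ⟨?_, key⟩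
  have hset : {x : ℝ | ∃ B ⊆ A, HasDens B x} = {0} := by
    ext x
    simp only [Set.mem_setOf_eq, Set.mem_singleton_iff]
    constructor
    · rintro ⟨B, hB, hx⟩; exact key B hB x hx
    · rintro rfl
      refine ⟨∅, Set.empty_subset A, ?_⟩
      have hc : ∀ n : ℕ, cnt (∅ : Set ℕ) n = 0 := by
        intro n; simp [cnt]
      simp only [HasDens, hc, zero_div]
      exact tendsto_const_nhds
  rw [lld, hset, csSup_singleton]
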